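/- Let V ⊂ ℂ^m be a special Lagrangian m-plane (a real m-dimensional subspace on which the Kähler form ω vanishes and Re Ω restricts to the volume form, Ω = dz_1 ∧ ⋯ ∧ dz_m), and suppose V = U ⊕ W is an orthogonal direct sum of real subspaces with dim U = k. Then the real m-plane I(U) ⊕ W (where I is multiplication by i on ℂ^m) is Lagrangian, and Ω restricted to I(U) ⊕ W equals (±i)^k times its volume form; in particular I(U) ⊕ W is special Lagrangian with phase i^k or −i^k. -/

import Mathlib

open Module

noncomputable def myB (m : ℕ) : LinearMap.BilinForm ℝ (Fin m → ℂ) :=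
  LinearMap.mk₂ ℝ (fun x y => (∑ j, (starRingEnd ℂ (x j)) * y j).re)
    (by intro x x' y; simp [map_add, add_mul, Finset.sum_add_distrib])
    (by intro r x y
        simp [Pi.smul_apply, Complex.real_smul, map_mul, mul_assoc, ← Finset.mul_sum,
          Complex.re_ofReal_mul])
    (by intro x y y'; simp [mul_add, Finset.sum_add_distrib])
    (by intro r x y
        simp only [Pi.smul_apply, Complex.real_smul, smul_eq_mul]
        calc (∑ j, (starRingEnd ℂ) (x j) * ((r:ℂ) * y j)).re
            = ((r:ℂ) * ∑ j, (starRingEnd ℂ) (x j) * y j).re := by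
              rw [Finset.mul_sum]; exact congrArg _ (Finset.sum_congr rfl fun j _ => by ring)
          _ = r * (∑ j, (starRingEnd ℂ) (x j) * y j).re := Complex.re_ofReal_mul r _)

theorem myB_apply {m : ℕ} (x y : Fin m → ℂ) :
    myB m x y = (∑ j, (starRingEnd ℂ (x j)) * y j).re := rfl

theorem myB_symm {m : ℕ} : (myB m).IsSymm := by
  rw [LinearMap.BilinForm.isSymm_def]
  intro x y
  simp only [RingHom.id_apply, myB_apply]
  rw [← Complex.conj_re (∑ j, (starRingEnd ℂ) (x j) * y j)]
  congr 1
  rw [map_sum]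
  exact Finset.sum_congr rfl fun j _ => by simp [mul_comm]

theorem myB_self {m : ℕ} (x : Fin m → ℂ) :
    myB m x x = ∑ j, Complex.normSq (x j) := by
  rw [myB_apply, Complex.re_sum]
  refine Finset.sum_congr rfl fun j _ => ?_
  rw [mul_comm, Complex.mul_conj, Complex.ofReal_re]

theorem myB_self_pos {m : ℕ} {x : Fin m → ℂ} (hx : x ≠ 0) : 0 < myB m x x := by
  rw [myB_self]
  obtain ⟨j, hj⟩ : ∃ j, x j ≠ 0 := by
    by_contra h; push_neg at h; exact hx (funext h)
  exact Finset.sum_pos' (fun i _ => Complex.normSq_nonneg _)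
    ⟨j, Finset.mem_univ j, Complex.normSq_pos.2 hj⟩

theorem aux_onb {m : ℕ} (S : Submodule ℝ (Fin m → ℂ)) :
    ∃ c : Fin (finrank ℝ S) → (Fin m → ℂ), (∀ i, c i ∈ S) ∧
      ∀ i i', myB m (c i) (c i') = if i = i' then 1 else 0 := by
  obtain ⟨v, hv⟩ := LinearMap.BilinForm.exists_orthogonal_basis
    (B := (myB m).restrict S) (LinearMap.BilinForm.isSymm_iff.1 (myB_symm.restrict S))
  have hpos : ∀ i, 0 < myB m (v i) (v i) := fun i =>
    myB_self_pos (by simpa using v.ne_zero i)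
  refine ⟨fun i => (Real.sqrt (myB m (v i) (v i)))⁻¹ • (v i : Fin m → ℂ),
    fun i => S.smul_mem _ (v i).2, fun i i' => ?_⟩
  have expand : myB m ((Real.sqrt (myB m (v i) (v i)))⁻¹ • (v i : Fin m → ℂ))
      ((Real.sqrt (myB m (v i') (v i')))⁻¹ • (v i' : Fin m → ℂ))
      = (Real.sqrt (myB m (v i) (v i)))⁻¹ * ((Real.sqrt (myB m (v i') (v i')))⁻¹
        * myB m (v i) (v i')) := by
    rw [map_smul, LinearMap.map_smul₂, smul_eq_mul, smul_eq_mul]; ring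
  rw [expand]
  rcases eq_or_ne i i' with rfl | hne
  · rw [if_pos rfl]
    have h := Real.sqrt_pos.2 (hpos i)
    rw [← mul_assoc, ← mul_inv]
    rw [Real.mul_self_sqrt (hpos i).le]
    exact inv_mul_cancel₀ (hpos i).ne'
  · rw [if_neg hne]
    have : myB m (v i) (v i') = 0 := hv hne
    rw [this, mul_zero, mul_zero]

theorem aux_det {m : ℕ} (V : Submodule ℝ (Fin m → ℂ)) (hdimV : Module.finrank ℝ V = m)
    (b c : Fin m → (Fin m → ℂ)) (hb : ∀ i, b i ∈ V) (hc : ∀ i, c i ∈ V)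
    (hbON : ∀ i i', myB m (b i) (b i') = if i = i' then 1 else 0)
    (hcON : ∀ i i', myB m (c i) (c i') = if i = i' then 1 else 0) :
    Matrix.det (Matrix.of fun i j => c i j) = Matrix.det (Matrix.of fun i j => b i j) ∨
    Matrix.det (Matrix.of fun i j => c i j) = - Matrix.det (Matrix.of fun i j => b i j) := by
  classical
  rcases isEmpty_or_nonempty (Fin m) with hem | hne
  · left; rw [Matrix.det_isEmpty, Matrix.det_isEmpty]
  have hV : FiniteDimensional ℝ V := inferInstance
  set b' : Fin m → V := fun i => ⟨b i, hb i⟩ with hb'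
  have hli : LinearIndependent ℝ b' := by
    rw [Fintype.linearIndependent_iff]
    intro g hg j
    have hg' : (∑ i, g i • b i) = 0 := by
      have := congrArg (Subtype.val) hg
      simpa using this
    have := congrArg (fun x => myB m (b j) x) hg'
    simp only [map_sum, map_smul, smul_eq_mul, map_zero] at this
    simp only [hbON] at this
    simpa using this
  have hcard : Fintype.card (Fin m) = finrank ℝ V := by simp [hdimV]
  set basis := basisOfLinearIndependentOfCardEqFinrank hli hcard with hbdef
  have hbasis : ∀ i, (basis i : Fin m → ℂ) = b i := fun i => by
    have : basis i = b' i :=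
      congrFun (coe_basisOfLinearIndependentOfCardEqFinrank hli hcard) i
    rw [this]
  set O : Matrix (Fin m) (Fin m) ℝ := Matrix.of fun i j => basis.repr ⟨c i, hc i⟩ j with hO
  have hrepr : ∀ i, c i = ∑ j, O i j • b j := by
    intro i
    have := basis.sum_repr ⟨c i, hc i⟩
    have := congrArg (Subtype.val) this
    simp only [Submodule.coe_sum, SetLike.val_smul] at this
    rw [← this]
    exact (Finset.sum_congr rfl fun j _ => by rw [hbasis]; rfl).symm
  have hOrth : O * Matrix.transpose O = 1 := by
    ext i i'
    have h1 : myB m (c i) (c i') = ∑ j, O i j * O i' j := by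
      rw [hrepr i, hrepr i']
      simp only [map_sum, LinearMap.map_smul₂, LinearMap.sum_apply, LinearMap.smul_apply,
        map_smul, smul_eq_mul, hbON]
      simp [Finset.mul_sum, mul_ite, Finset.sum_ite_eq', mul_comm]
    rw [hcON] at h1
    simp [Matrix.mul_apply, Matrix.one_apply, Matrix.transpose_apply, ← h1]
  have hdet2 : O.det * O.det = 1 := by
    have := congrArg Matrix.det hOrth
    rwa [Matrix.det_mul, Matrix.det_transpose, Matrix.det_one] at this
  have hmat : (Matrix.of fun i j => c i j)
      = O.map (Complex.ofRealHom) * (Matrix.of fun i j => b i j) := by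
    ext i j
    have := congrFun (hrepr i) j
    simp only [Finset.sum_apply, Pi.smul_apply, Complex.real_smul] at this
    simpa [Matrix.mul_apply, Matrix.map_apply] using this
  have hdetc : Matrix.det (Matrix.of fun i j => c i j)
      = (O.det : ℂ) * Matrix.det (Matrix.of fun i j => b i j) := by
    rw [hmat, Matrix.det_mul]
    congr 1
    rw [← RingHom.mapMatrix_apply, ← RingHom.map_det]
    rfl
  rcases mul_self_eq_one_iff.1 hdet2 with h | h
  · left; rw [hdetc, h]; simp
  · right; rw [hdetc, h]; simp

theorem stmt19 {m : ℕ} (V U W : Submodule ℝ (Fin m → ℂ))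
    (hdim : Module.finrank ℝ V = m)
    (hsup : U ⊔ W = V) (hinf : U ⊓ W = ⊥)
    (hperp : ∀ u ∈ U, ∀ w ∈ W, (∑ j, (starRingEnd ℂ (u j)) * w j).re = 0)
    (hLag : ∀ v ∈ V, ∀ v' ∈ V, (∑ j, (starRingEnd ℂ (v j)) * v' j).im = 0)
    (hSL : ∃ b : Fin m → (Fin m → ℂ), (∀ i, b i ∈ V) ∧
      (∀ i i', (∑ j, (starRingEnd ℂ (b i j)) * b i' j).re = if i = i' then 1 else 0) ∧
      Matrix.det (Matrix.of fun i j => b i j) = 1)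
    (k : ℕ) (hk : k = Module.finrank ℝ U) :
    let P := U.map (LinearMap.restrictScalars ℝ
        (LinearMap.lsmul ℂ (Fin m → ℂ) Complex.I)) ⊔ W
    Module.finrank ℝ P = m ∧
    (∀ v ∈ P, ∀ v' ∈ P, (∑ j, (starRingEnd ℂ (v j)) * v' j).im = 0) ∧
    ∃ cb : Fin m → (Fin m → ℂ), (∀ i, cb i ∈ P) ∧
      (∀ i i', (∑ j, (starRingEnd ℂ (cb i j)) * cb i' j).re = if i = i' then 1 else 0) ∧
      (Matrix.det (Matrix.of fun i j => cb i j) = Complex.I ^ k ∨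
        Matrix.det (Matrix.of fun i j => cb i j) = -(Complex.I ^ k)) := by
  classical
  intro P
  obtain ⟨b, hbV, hbON', hbdet⟩ := hSL
  have hbON : ∀ i i', myB m (b i) (b i') = if i = i' then 1 else 0 := hbON'
  have hUV : U ≤ V := hsup ▸ le_sup_left
  have hWV : W ≤ V := hsup ▸ le_sup_right
  set f := LinearMap.restrictScalars ℝ (LinearMap.lsmul ℂ (Fin m → ℂ) Complex.I) with hf
  set IU := U.map f with hIU
  -- dimensions
  have hdsum : finrank ℝ U + finrank ℝ W = m := by
    have h := Submodule.finrank_sup_add_finrank_inf_eq U W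
    rw [hsup, hinf, hdim, finrank_bot] at h
    omega
  have hkm : k ≤ m := by omega
  have hWrk : finrank ℝ W = m - k := by omega
  -- Hermitian orthogonality of U and W
  have hUW0 : ∀ u ∈ U, ∀ w ∈ W, (∑ j, (starRingEnd ℂ (u j)) * w j) = 0 := by
    intro u hu w hw
    exact Complex.ext (hperp u hu w hw) (hLag u (hUV hu) w (hWV hw))
  have hWU0 : ∀ w ∈ W, ∀ u ∈ U, (∑ j, (starRingEnd ℂ (w j)) * u j) = 0 := by
    intro w hw u hu
    have : (∑ j, (starRingEnd ℂ (w j)) * u j)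
        = starRingEnd ℂ (∑ j, (starRingEnd ℂ (u j)) * w j) := by
      rw [map_sum]
      exact Finset.sum_congr rfl fun j _ => by simp [mul_comm]
    rw [this, hUW0 u hu w hw, map_zero]
  -- the linear equiv given by multiplication by I
  have hIne : (Complex.I : ℂ) ≠ 0 := Complex.I_ne_zero
  set e : (Fin m → ℂ) ≃ₗ[ℝ] (Fin m → ℂ) :=
    (LinearEquiv.smulOfNeZero ℂ (Fin m → ℂ) Complex.I hIne).restrictScalars ℝ with he
  have hfe : ∀ x, f x = Complex.I • x := fun x => rfl
  have hmapeq : IU = U.map (e : (Fin m → ℂ) →ₗ[ℝ] (Fin m → ℂ)) := by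
    have hfeq : f = (e : (Fin m → ℂ) →ₗ[ℝ] (Fin m → ℂ)) := LinearMap.ext fun x => rfl
    rw [hIU, hfeq]
  have hrkIU : finrank ℝ IU = k := by
    rw [hmapeq, LinearEquiv.finrank_map_eq, hk]
  -- IU ⊓ W = ⊥
  have hIUW : IU ⊓ W = ⊥ := by
    rw [Submodule.eq_bot_iff]
    rintro x ⟨hxIU, hxW⟩
    obtain ⟨u, hu, rfl⟩ := hxIU
    have him := hLag u (hUV hu) (f u) (hWV hxW)
    have hexp : (∑ j, (starRingEnd ℂ (u j)) * (f u) j)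
        = Complex.I * ∑ j, (starRingEnd ℂ (u j)) * u j := by
      rw [Finset.mul_sum]
      refine Finset.sum_congr rfl fun j _ => ?_
      rw [hfe]
      simp [Pi.smul_apply, smul_eq_mul]
      ring
    rw [hexp, Complex.I_mul_im] at him
    have hre : (∑ j, (starRingEnd ℂ (u j)) * u j).re = ∑ j, Complex.normSq (u j) := by
      have := myB_self u
      rw [myB_apply] at this
      exact this
    rw [hre] at him
    have hu0 : u = 0 := by
      funext j
      have hj := (Finset.sum_eq_zero_iff_of_nonneg
        (fun i _ => Complex.normSq_nonneg (u i))).1 him j (Finset.mem_univ j)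
      exact Complex.normSq_eq_zero.1 hj
    rw [hfe, hu0, smul_zero]
  have hrkP : finrank ℝ P = m := by
    have h := Submodule.finrank_sup_add_finrank_inf_eq IU W
    rw [hIUW, finrank_bot, hrkIU, hWrk] at h
    have hPeq : P = IU ⊔ W := rfl
    rw [hPeq]
    omega
  have hPeq : P = IU ⊔ W := rfl
  refine ⟨hrkP, ?_, ?_⟩
  · -- Lagrangian
    intro v hv v' hv'
    rw [hPeq] at hv hv'
    obtain ⟨x, hx, w, hw, rfl⟩ := Submodule.mem_sup.1 hv
    obtain ⟨x', hx', w', hw', rfl⟩ := Submodule.mem_sup.1 hv'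
    obtain ⟨u, hu, rfl⟩ := hx
    obtain ⟨u', hu', rfl⟩ := hx'
    have hsplit : (∑ j, starRingEnd ℂ ((f u + w) j) * ((f u' + w') j))
        = ((∑ j, starRingEnd ℂ (u j) * u' j) + (∑ j, starRingEnd ℂ (w j) * w' j))
          + ((- Complex.I) * (∑ j, starRingEnd ℂ (u j) * w' j)
          + Complex.I * (∑ j, starRingEnd ℂ (w j) * u' j)) := by
      rw [Finset.mul_sum, Finset.mul_sum, ← Finset.sum_add_distrib, ← Finset.sum_add_distrib,
        ← Finset.sum_add_distrib]
      refine Finset.sum_congr rfl fun j _ => ?_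
      rw [hfe, hfe]
      simp only [Pi.add_apply, Pi.smul_apply, smul_eq_mul, map_add, map_mul, Complex.conj_I]
      ring_nf
      rw [Complex.I_sq]
      ring
    rw [hsplit, hUW0 u hu w' hw', hWU0 w hw u' hu']
    simp only [mul_zero, add_zero]
    rw [Complex.add_im, hLag u (hUV hu) u' (hUV hu'), hLag w (hWV hw) w' (hWV hw'), add_zero]
  · -- the special Lagrangian basis
    obtain ⟨cu0, hcuU0, hcuON0⟩ := aux_onb U
    obtain ⟨cw0, hcwW0, hcwON0⟩ := aux_onb W
    set cu : Fin k → (Fin m → ℂ) := fun a => cu0 (finCongr hk a) with hcu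
    set cw : Fin (m - k) → (Fin m → ℂ) := fun a => cw0 (finCongr hWrk.symm a) with hcw
    have hcuU : ∀ a, cu a ∈ U := fun a => hcuU0 _
    have hcwW : ∀ a, cw a ∈ W := fun a => hcwW0 _
    have hcuON : ∀ a a', myB m (cu a) (cu a') = if a = a' then 1 else 0 := by
      intro a a'
      rw [hcu]
      rw [hcuON0]
      rcases eq_or_ne a a' with rfl | h
      · simp
      · rw [if_neg h, if_neg (fun hc => h ((finCongr hk).injective hc))]
    have hcwON : ∀ a a', myB m (cw a) (cw a') = if a = a' then 1 else 0 := by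
      intro a a'
      rw [hcw, hcwON0]
      rcases eq_or_ne a a' with rfl | h
      · simp
      · rw [if_neg h, if_neg (fun hc => h ((finCongr hWrk.symm).injective hc))]
    set e2 : (Fin k ⊕ Fin (m - k)) ≃ Fin m := finSumFinEquiv.trans (finCongr (by omega)) with he2
    set g : (Fin k ⊕ Fin (m - k)) → (Fin m → ℂ) := Sum.elim cu cw with hg
    set gb : (Fin k ⊕ Fin (m - k)) → (Fin m → ℂ) :=
      Sum.elim (fun a => Complex.I • cu a) cw with hgb
    set c : Fin m → (Fin m → ℂ) := fun i => g (e2.symm i) with hc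
    set cb : Fin m → (Fin m → ℂ) := fun i => gb (e2.symm i) with hcb
    have hgV : ∀ s, g s ∈ V := by rintro (a | a); exacts [hUV (hcuU a), hWV (hcwW a)]
    have hcV : ∀ i, c i ∈ V := fun i => hgV _
    have hgON : ∀ s s', myB m (g s) (g s') = if s = s' then 1 else 0 := by
      rintro (a | a) (a' | a')
      · rw [show g (Sum.inl a) = cu a from rfl, show g (Sum.inl a') = cu a' from rfl, hcuON]
        rcases eq_or_ne a a' with rfl | h
        · simp
        · rw [if_neg h, if_neg (by simp [h])]
      · rw [if_neg (by simp), show g (Sum.inl a) = cu a from rfl,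
          show g (Sum.inr a') = cw a' from rfl, myB_apply]
        exact hperp _ (hcuU a) _ (hcwW a')
      · rw [if_neg (by simp), show g (Sum.inr a) = cw a from rfl,
          show g (Sum.inl a') = cu a' from rfl, myB_apply, hWU0 _ (hcwW a) _ (hcuU a')]
        rfl
      · rw [show g (Sum.inr a) = cw a from rfl, show g (Sum.inr a') = cw a' from rfl, hcwON]
        rcases eq_or_ne a a' with rfl | h
        · simp
        · rw [if_neg h, if_neg (by simp [h])]
    have hcON : ∀ i i', myB m (c i) (c i') = if i = i' then 1 else 0 := by
      intro i i'
      rw [show c i = g (e2.symm i) from rfl, show c i' = g (e2.symm i') from rfl, hgON]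
      rcases eq_or_ne i i' with rfl | h
      · simp
      · rw [if_neg (fun hc => h (e2.symm.injective hc)), if_neg h]
    have hdc := aux_det V hdim b c hbV hcV hbON hcON
    rw [hbdet] at hdc
    have hgbP : ∀ s, gb s ∈ IU ⊔ W := by
      rintro (a | a)
      · exact Submodule.mem_sup_left ⟨cu a, hcuU a, rfl⟩
      · exact Submodule.mem_sup_right (hcwW a)
    have hcbP : ∀ i, cb i ∈ P := fun i => by rw [hPeq]; exact hgbP _
    have hgbON : ∀ s s', (∑ j, starRingEnd ℂ (gb s j) * gb s' j).re
        = if s = s' then 1 else 0 := by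
      have hLL : ∀ (x y : Fin m → ℂ), (∑ j, starRingEnd ℂ ((Complex.I • x) j)
          * ((Complex.I • y) j)) = ∑ j, starRingEnd ℂ (x j) * y j := by
        intro x y
        refine Finset.sum_congr rfl fun j _ => ?_
        simp only [Pi.smul_apply, smul_eq_mul, map_mul, Complex.conj_I]
        ring_nf
        rw [Complex.I_sq]
        ring
      rintro (a | a) (a' | a')
      · rw [show gb (Sum.inl a) = Complex.I • cu a from rfl,
          show gb (Sum.inl a') = Complex.I • cu a' from rfl, hLL]
        have := hcuON a a'
        rw [myB_apply] at this
        rw [this]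
        rcases eq_or_ne a a' with rfl | h
        · simp
        · rw [if_neg h, if_neg (by simp [h])]
      · rw [if_neg (by simp), show gb (Sum.inl a) = Complex.I • cu a from rfl,
          show gb (Sum.inr a') = cw a' from rfl]
        have : (∑ j, starRingEnd ℂ ((Complex.I • cu a) j) * cw a' j)
            = (- Complex.I) * ∑ j, starRingEnd ℂ (cu a j) * cw a' j := by
          rw [Finset.mul_sum]
          refine Finset.sum_congr rfl fun j _ => ?_
          simp only [Pi.smul_apply, smul_eq_mul, map_mul, Complex.conj_I]
          ring
        rw [this, hUW0 _ (hcuU a) _ (hcwW a'), mul_zero, Complex.zero_re]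
      · rw [if_neg (by simp), show gb (Sum.inr a) = cw a from rfl,
          show gb (Sum.inl a') = Complex.I • cu a' from rfl]
        have : (∑ j, starRingEnd ℂ (cw a j) * (Complex.I • cu a') j)
            = Complex.I * ∑ j, starRingEnd ℂ (cw a j) * cu a' j := by
          rw [Finset.mul_sum]
          refine Finset.sum_congr rfl fun j _ => ?_
          simp only [Pi.smul_apply, smul_eq_mul]
          ring
        rw [this, hWU0 _ (hcwW a) _ (hcuU a'), mul_zero, Complex.zero_re]
      · rw [show gb (Sum.inr a) = cw a from rfl, show gb (Sum.inr a') = cw a' from rfl]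
        have := hcwON a a'
        rw [myB_apply] at this
        rw [this]
        rcases eq_or_ne a a' with rfl | h
        · simp
        · rw [if_neg h, if_neg (by simp [h])]
    have hcbON : ∀ i i', (∑ j, starRingEnd ℂ (cb i j) * cb i' j).re
        = if i = i' then 1 else 0 := by
      intro i i'
      rw [show cb i = gb (e2.symm i) from rfl, show cb i' = gb (e2.symm i') from rfl, hgbON]
      rcases eq_or_ne i i' with rfl | h
      · simp
      · rw [if_neg (fun hc => h (e2.symm.injective hc)), if_neg h]
    set d : Fin m → ℂ :=
      fun i => Sum.elim (fun _ => Complex.I) (fun _ => (1 : ℂ)) (e2.symm i) with hd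
    have hgb_eq : ∀ s, gb s = (Sum.elim (fun _ => Complex.I) (fun _ => (1 : ℂ)) s)
        • g s := by
      rintro (a | a)
      · rfl
      · exact (one_smul ℂ _).symm
    have hcb_eq : ∀ i, cb i = d i • c i := fun i => hgb_eq (e2.symm i)
    have hmcb : (Matrix.of fun i j => cb i j)
        = Matrix.diagonal d * (Matrix.of fun i j => c i j) := by
      ext i j
      rw [Matrix.diagonal_mul]
      have := congrFun (hcb_eq i) j
      simpa [Pi.smul_apply, smul_eq_mul] using this
    have hdetd : (Matrix.diagonal d).det = Complex.I ^ k := by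
      rw [Matrix.det_diagonal]
      have h1 : ∏ i, d i
          = ∏ s, Sum.elim (fun _ => Complex.I) (fun _ => (1 : ℂ)) s :=
        Equiv.prod_comp e2.symm _
      rw [h1, Fintype.prod_sum_type]
      simp
    have hdetcb : Matrix.det (Matrix.of fun i j => cb i j)
        = Complex.I ^ k * Matrix.det (Matrix.of fun i j => c i j) := by
      rw [hmcb, Matrix.det_mul, hdetd]
    refine ⟨cb, hcbP, hcbON, ?_⟩
    rcases hdc with h | h
    · left; rw [hdetcb, h, mul_one]
    · right; rw [hdetcb, h]; ring
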